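/- Let X be a finite topological T₀-space and let φ : ℝ≥0 × X → X be a semiflow. Then for every t ∈ ℝ≥0 and every x ∈ X, φ(t,x) ≤ x in the specialization order (equivalently, φ(t,x) ⤳ x, i.e., φ(t,x) belongs to the minimal open set U_x containing x). -/

import Mathlib

open NNReal
open Topology Filter

/-- A semiflow on a topological space `X`: a jointly continuous map
`φ : ℝ≥0 × X → X` with `φ 0 x = x` and `φ s (φ t x) = φ (s + t) x`. -/
def IsSemiflow {X : Type*} [TopologicalSpace X] (φ : ℝ≥0 → X → X) : Prop :=
  Continuous (fun p : ℝ≥0 × X => φ p.1 p.2) ∧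
  (∀ x : X, φ 0 x = x) ∧
  ∀ (s t : ℝ≥0) (x : X), φ s (φ t x) = φ (s + t) x

/-- A semiflow is trivial if every time-`t` map is the identity. -/
def IsTrivialSemiflow {X : Type*} [TopologicalSpace X] (φ : ℝ≥0 → X → X) : Prop :=
  ∀ (t : ℝ≥0) (x : X), φ t x = x

/-- `x` is a down beat point: `U_x \ {x}` has a greatest element in the
specialization order (`y ⤳ x` means `y ≤ x`, i.e. `y ∈ U_x`). -/
def IsDownBeatPoint {X : Type*} [TopologicalSpace X] (x : X) : Prop :=
  ∃ m : X, (m ⤳ x ∧ m ≠ x) ∧ ∀ y : X, y ⤳ x → y ≠ x → y ⤳ m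

/-- `x` is an up beat point: `F_x \ {x}` has a least element in the
specialization order. -/
def IsUpBeatPoint {X : Type*} [TopologicalSpace X] (x : X) : Prop :=
  ∃ m : X, (x ⤳ m ∧ m ≠ x) ∧ ∀ y : X, x ⤳ y → y ≠ x → m ⤳ y

/-- For a semiflow on a finite `T₀`-space, `φ t x ⤳ x` for all `t` and `x`,
i.e. `φ t x` lies in the minimal open set `U_x`. -/
theorem semiflow_le_id {X : Type*} [TopologicalSpace X] [Finite X] [T0Space X]
    (φ : ℝ≥0 → X → X) (hφ : IsSemiflow φ) :
    ∀ (t : ℝ≥0) (x : X), φ t x ⤳ x := by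
  obtain ⟨hc, h0, hadd⟩ := hφ
  -- local lemma: small times specialize
  have h1 : ∀ x : X, ∃ ε : ℝ≥0, 0 < ε ∧ ∀ s : ℝ≥0, s < ε → φ s x ⤳ x := by
    intro x
    have hx : φ 0 x ∈ nhdsKer ({x} : Set X) := by
      rw [h0]; exact subset_nhdsKer rfl
    have hmem : (fun p : ℝ≥0 × X => φ p.1 p.2) ⁻¹' nhdsKer ({x} : Set X) ∈ 𝓝 ((0 : ℝ≥0), x) :=
      hc.continuousAt (isOpen_nhdsKer.mem_nhds hx)
    rw [nhds_prod_eq, Filter.mem_prod_iff] at hmem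
    obtain ⟨u, hu, v, hv, huv⟩ := hmem
    obtain ⟨ε, hε, hIio⟩ := NNReal.nhds_zero_basis.mem_iff.mp hu
    refine ⟨ε, hε, fun s hs => ?_⟩
    have hsx : ((s, x) : ℝ≥0 × X) ∈ u ×ˢ v :=
      ⟨hIio (Set.mem_Iio.mpr hs), mem_of_mem_nhds hv⟩
    exact mem_nhdsKer_singleton.mp (huv hsx)
  intro t x
  cases isEmpty_or_nonempty X
  · exact (IsEmpty.false x).elim
  cases nonempty_fintype X
  choose ε hεpos hε using h1
  set ε0 : ℝ≥0 := Finset.univ.inf' Finset.univ_nonempty ε with hε0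
  have hε0pos : 0 < ε0 := by
    rw [hε0, Finset.lt_inf'_iff]
    exact fun y _ => hεpos y
  have hsmall : ∀ s : ℝ≥0, s < ε0 → ∀ y : X, φ s y ⤳ y := by
    intro s hs y
    exact hε y s (lt_of_lt_of_le hs (Finset.inf'_le _ (Finset.mem_univ y)))
  have key : ∀ (n : ℕ) (δ : ℝ≥0), δ < ε0 → ∀ y : X, φ (n * δ) y ⤳ y := by
    intro n
    induction n with
    | zero => intro δ _ y; simp only [Nat.cast_zero, zero_mul, h0]; exact specializes_rfl
    | succ n ih =>
      intro δ hδ y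
      have : φ ((n + 1 : ℕ) * δ) y = φ δ (φ (n * δ) y) := by
        rw [hadd]; congr 1; push_cast; ring
      rw [this]
      exact (hsmall δ hδ _).trans (ih δ hδ y)
  rcases eq_or_ne t 0 with rfl | ht
  · rw [h0]
  · obtain ⟨n, hn⟩ := exists_nat_gt (t / ε0)
    have hn0 : (n : ℝ≥0) ≠ 0 := by
      rintro h
      rw [h] at hn
      exact (not_lt.mpr zero_le) hn
    have hδ : t / n < ε0 := by
      rw [div_lt_iff₀ (pos_iff_ne_zero.mpr hn0), mul_comm]
      exact (div_lt_iff₀ hε0pos).mp hn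
    have := key n (t / n) hδ x
    rwa [mul_div_cancel₀ _ hn0] at this
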